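/- Let (P,<) be a finite poset and let (B,U) and (B',U') be two partitions of P, both satisfying: B and B' contain all deficit elements, U and U' contain all surplus elements (balanced elements distributed arbitrarily). Then e(B,U) = e(B',U'). -/
import Mathlib


open Finset
open scoped Classical

/-- `e X Y` counts pairs `(x,y)` with `x ∈ X`, `y ∈ Y`, `x < y`. -/
noncomputable def e {P : Type*} [Fintype P] [PartialOrder P] (X Y : Finset P) : ℕ :=
  ((X ×ˢ Y).filter fun p => p.1 < p.2).card

section Aux

variable {P : Type*} [Fintype P] [PartialOrder P]

lemma e_eq_sum (X Y : Finset P) :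
    e X Y = ∑ x ∈ X, (Y.filter fun y => x < y).card := by
  classical
  rw [e, Finset.card_filter, Finset.sum_product]
  exact Finset.sum_congr rfl fun x _ => (Finset.card_filter _ _).symm

lemma e_eq_sum' (X Y : Finset P) :
    e X Y = ∑ y ∈ Y, (X.filter fun x => x < y).card := by
  classical
  rw [e, Finset.card_filter, Finset.sum_product_right]
  exact Finset.sum_congr rfl fun y _ => (Finset.card_filter _ _).symm

lemma e_singleton_left (v : P) (Y : Finset P) :
    e {v} Y = (Y.filter fun y => v < y).card := by
  simp [e_eq_sum]

lemma e_singleton_right (X : Finset P) (v : P) :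
    e X {v} = (X.filter fun x => x < v).card := by
  simp [e_eq_sum']

lemma e_union_right (X Y Z : Finset P) (h : Disjoint Y Z) :
    e X (Y ∪ Z) = e X Y + e X Z := by
  classical
  simp only [e_eq_sum, filter_union]
  rw [← Finset.sum_add_distrib]
  refine Finset.sum_congr rfl fun x _ => ?_
  exact Finset.card_union_of_disjoint (h.mono (filter_subset _ _) (filter_subset _ _))

lemma e_union_left (X Y Z : Finset P) (h : Disjoint X Y) :
    e (X ∪ Y) Z = e X Z + e Y Z := by
  classical
  simp only [e_eq_sum', filter_union]
  rw [← Finset.sum_add_distrib]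
  refine Finset.sum_congr rfl fun x _ => ?_
  exact Finset.card_union_of_disjoint (h.mono (filter_subset _ _) (filter_subset _ _))

lemma no_cross (u v : P)
    (hu : (univ.filter fun y => u < y).card ≤ (univ.filter fun x => x < u).card)
    (hv : (univ.filter fun x => x < v).card ≤ (univ.filter fun y => v < y).card) :
    ¬ u < v := by
  intro huv
  have h1 : (univ.filter fun x => x < u).card < (univ.filter fun x => x < v).card := by
    apply Finset.card_lt_card
    rw [Finset.ssubset_iff_of_subset]
    · exact ⟨u, by simp [huv], by simp⟩
    · intro x hx
      simp only [mem_filter, mem_univ, true_and] at hx ⊢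
      exact hx.trans huv
  have h2 : (univ.filter fun y => v < y).card < (univ.filter fun y => u < y).card := by
    apply Finset.card_lt_card
    rw [Finset.ssubset_iff_of_subset]
    · exact ⟨v, by simp [huv], by simp⟩
    · intro x hx
      simp only [mem_filter, mem_univ, true_and] at hx ⊢
      exact huv.trans hx
  omega

lemma key (C D : Finset P) (hdis : Disjoint C D) (hun : C ∪ D = univ)
    (hB : ∀ v : P, e (univ : Finset P) {v} < e {v} (univ : Finset P) → v ∈ C)
    (hU : ∀ v : P, e {v} (univ : Finset P) < e (univ : Finset P) {v} → v ∈ D) :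
    (e C D : ℤ) = ∑ v ∈ univ.filter (fun v => e (univ : Finset P) {v} < e {v} (univ : Finset P)),
      ((e {v} (univ : Finset P) : ℤ) - (e (univ : Finset P) {v} : ℤ)) := by
  classical
  have hCge : ∀ v ∈ C, e (univ : Finset P) {v} ≤ e {v} (univ : Finset P) := by
    intro v hv
    by_contra h
    push_neg at h
    exact (Finset.disjoint_left.mp hdis hv) (hU v h)
  have hDle : ∀ v ∈ D, e {v} (univ : Finset P) ≤ e (univ : Finset P) {v} := by
    intro v hv
    by_contra h
    push_neg at h
    exact (Finset.disjoint_left.mp hdis (hB v h)) hv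
  -- no pair (x, y) with x ∈ D, y ∈ C, x < y
  have hDC : e D C = 0 := by
    rw [e_eq_sum]
    refine Finset.sum_eq_zero fun x hx => ?_
    rw [Finset.card_eq_zero, Finset.filter_eq_empty_iff]
    intro y hy
    have hle := hDle x hx
    have hge := hCge y hy
    simp only [e_singleton_left, e_singleton_right] at hle hge
    exact no_cross x y hle hge
  have h1 : e C (univ : Finset P) = e C C + e C D := by
    rw [← hun, e_union_right _ _ _ hdis]
  have h2 : e (univ : Finset P) C = e C C + e D C := by
    rw [← hun, e_union_left _ _ _ hdis]
  have hmain : (e C D : ℤ) = (e C (univ : Finset P) : ℤ) - (e (univ : Finset P) C : ℤ) := by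
    omega
  have hA : (e C (univ : Finset P) : ℤ) = ∑ v ∈ C, (e {v} (univ : Finset P) : ℤ) := by
    rw [e_eq_sum]
    push_cast
    exact Finset.sum_congr rfl fun v _ => by rw [e_singleton_left]
  have hL : (e (univ : Finset P) C : ℤ) = ∑ v ∈ C, (e (univ : Finset P) {v} : ℤ) := by
    rw [e_eq_sum']
    push_cast
    exact Finset.sum_congr rfl fun v _ => by rw [e_singleton_right]
  rw [hmain, hA, hL, ← Finset.sum_sub_distrib]
  have hCf : univ.filter (fun v => e (univ : Finset P) {v} < e {v} (univ : Finset P))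
      = C.filter (fun v => e (univ : Finset P) {v} < e {v} (univ : Finset P)) := by
    ext v
    simp only [mem_filter, mem_univ, true_and]
    exact ⟨fun h => ⟨hB v h, h⟩, fun h => h.2⟩
  rw [hCf]
  have hsplit := Finset.sum_filter_add_sum_filter_not C
    (fun v => e (univ : Finset P) {v} < e {v} (univ : Finset P))
    (fun v => (e {v} (univ : Finset P) : ℤ) - (e (univ : Finset P) {v} : ℤ))
  have hz : ∑ v ∈ C.filter (fun v => ¬ (e (univ : Finset P) {v} < e {v} (univ : Finset P))),
      ((e {v} (univ : Finset P) : ℤ) - (e (univ : Finset P) {v} : ℤ)) = 0 := by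
    refine Finset.sum_eq_zero fun v hv => ?_
    simp only [mem_filter] at hv
    have := hCge v hv.1
    have := hv.2
    omega
  omega

end Aux

/-- Any two cuts putting all deficit elements in `B` and all surplus elements in `U`
have the same size. -/
theorem cut_size_independent (P : Type*) [Fintype P] [PartialOrder P]
    (B U B' U' : Finset P)
    (h1 : Disjoint B U) (h2 : B ∪ U = Finset.univ)
    (h1' : Disjoint B' U') (h2' : B' ∪ U' = Finset.univ)
    (hd : ∀ v : P, e (Finset.univ : Finset P) {v} < e {v} (Finset.univ : Finset P) → v ∈ B)
    (hs : ∀ v : P, e {v} (Finset.univ : Finset P) < e (Finset.univ : Finset P) {v} → v ∈ U)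
    (hd' : ∀ v : P, e (Finset.univ : Finset P) {v} < e {v} (Finset.univ : Finset P) → v ∈ B')
    (hs' : ∀ v : P, e {v} (Finset.univ : Finset P) < e (Finset.univ : Finset P) {v} → v ∈ U') :
    e B U = e B' U' := by
  have k1 := key B U h1 h2 hd hs
  have k2 := key B' U' h1' h2' hd' hs'
  have : (e B U : ℤ) = (e B' U' : ℤ) := k1.trans k2.symm
  exact_mod_cast this
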